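/- In finite-dimensional quantum theory (A = Hermitian operators on ℂ² with the trace order unit), the maximal tensor product of A with itself strictly contains the minimal tensor product: there exists a linear functional on A* ⊗ A* that is positive on products of positive functionals, is normalized, but is not a convex combination of product states. (E.g., the swap-based or PPT-violating forms.) -/

import Mathlib

open ComplexOrder

/-- The qubit state space: self-adjoint 2×2 complex matrices. -/
noncomputable abbrev QubitSpace := selfAdjoint (Matrix (Fin 2) (Fin 2) ℂ)

/-- The trace order unit on the qubit state space. -/
noncomputable def qTrace : QubitSpace →ₗ[ℝ] ℝ where
  toFun a := (Matrix.trace (a : Matrix (Fin 2) (Fin 2) ℂ)).re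
  map_add' x y := by simp
  map_smul' r x := by simp [Complex.smul_re]

open Matrix in
noncomputable def s0 : QubitSpace := ⟨!![1,0;0,1], by
  ext i j; fin_cases i <;> fin_cases j <;> simp [Matrix.conjTranspose_apply]⟩
open Matrix in
noncomputable def s1 : QubitSpace := ⟨!![0,1;1,0], by
  ext i j; fin_cases i <;> fin_cases j <;> simp [Matrix.conjTranspose_apply]⟩
open Matrix in
noncomputable def s2 : QubitSpace := ⟨!![0,-Complex.I;Complex.I,0], by
  ext i j; fin_cases i <;> fin_cases j <;> simp [Matrix.conjTranspose_apply]⟩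
open Matrix in
noncomputable def s3 : QubitSpace := ⟨!![1,0;0,-1], by
  ext i j; fin_cases i <;> fin_cases j <;> simp [Matrix.conjTranspose_apply]⟩

noncomputable def f1 : QubitSpace →ₗ[ℝ] ℝ where
  toFun x := (((x : Matrix (Fin 2) (Fin 2) ℂ) 0 1).re + ((x : Matrix (Fin 2) (Fin 2) ℂ) 1 0).re)/2
  map_add' x y := by simp; ring
  map_smul' r x := by simp [Complex.smul_re]; ring

noncomputable def f2 : QubitSpace →ₗ[ℝ] ℝ where
  toFun x := (((x : Matrix (Fin 2) (Fin 2) ℂ) 1 0).im - ((x : Matrix (Fin 2) (Fin 2) ℂ) 0 1).im)/2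
  map_add' x y := by simp; ring
  map_smul' r x := by simp [Complex.smul_im]; ring

noncomputable def f3 : QubitSpace →ₗ[ℝ] ℝ where
  toFun x := (((x : Matrix (Fin 2) (Fin 2) ℂ) 0 0).re - ((x : Matrix (Fin 2) (Fin 2) ℂ) 1 1).re)/2
  map_add' x y := by simp; ring
  map_smul' r x := by simp [Complex.smul_re]; ring

noncomputable def omg : (QubitSpace →ₗ[ℝ] ℝ) →ₗ[ℝ] (QubitSpace →ₗ[ℝ] ℝ) →ₗ[ℝ] ℝ :=
  LinearMap.mk₂ ℝ (fun a b => (a s0 * b s0 + a s1 * b s1 + a s2 * b s2 + a s3 * b s3)/4)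
    (fun a a' b => by simp; ring)
    (fun c a b => by simp; ring)
    (fun a b b' => by simp; ring)
    (fun c a b => by simp; ring)

open Matrix in
lemma rho_psd (a : QubitSpace →ₗ[ℝ] ℝ)
    (ha : ∀ x : QubitSpace, (x : Matrix (Fin 2) (Fin 2) ℂ).PosSemidef → 0 ≤ a x) :
    (((1/2:ℝ) • (a s0 • s0 + a s1 • s1 + a s2 • s2 + a s3 • s3) : QubitSpace) :
      Matrix (Fin 2) (Fin 2) ℂ).PosSemidef := by
  set ρ : QubitSpace := (1/2:ℝ) • (a s0 • s0 + a s1 • s1 + a s2 • s2 + a s3 • s3) with hρ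
  refine Matrix.PosSemidef.of_dotProduct_mulVec_nonneg ρ.prop (fun z => ?_)
  set c0 : ℝ := ((z 0).re^2 + (z 0).im^2 + (z 1).re^2 + (z 1).im^2)/2 with hc0
  set c1 : ℝ := (z 0).re*(z 1).re + (z 0).im*(z 1).im with hc1
  set c2 : ℝ := (z 0).re*(z 1).im - (z 0).im*(z 1).re with hc2
  set c3 : ℝ := ((z 0).re^2 + (z 0).im^2 - (z 1).re^2 - (z 1).im^2)/2 with hc3
  set P : QubitSpace := c0 • s0 + c1 • s1 + c2 • s2 + c3 • s3 with hPdef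
  have hP : (P : Matrix (Fin 2) (Fin 2) ℂ).PosSemidef := by
    set N : Matrix (Fin 1) (Fin 2) ℂ := !![star (z 0), star (z 1)] with hN
    have he : (P : Matrix (Fin 2) (Fin 2) ℂ) = Nᴴ * N := by
      ext i j
      fin_cases i <;> fin_cases j <;>
        simp [hPdef, hN, s0, s1, s2, s3, hc0, hc1, hc2, hc3, Matrix.mul_apply,
          Fin.sum_univ_one, Matrix.conjTranspose_apply, Complex.ext_iff,
          ← Complex.ofReal_pow] <;>
        first
          | rfl
          | (constructor <;> ring)
          | ring
    rw [he]; exact Matrix.posSemidef_conjTranspose_mul_self _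
  have h0 : 0 ≤ a P := ha P hP
  have hval : a P = c0 * a s0 + c1 * a s1 + c2 * a s2 + c3 * a s3 := by
    simp [hPdef]
  have hQ : dotProduct (star z) ((ρ : Matrix (Fin 2) (Fin 2) ℂ) *ᵥ z) = ((a P : ℝ) : ℂ) := by
    rw [hval]
    simp only [hρ]
    simp [s0, s1, s2, s3, dotProduct, Matrix.mulVec, Fin.sum_univ_two,
      Complex.ext_iff, hc0, hc1, hc2, hc3, ← Complex.ofReal_pow]
    constructor <;> ring
  rw [hQ]
  exact_mod_cast h0

lemma bloch_bound (x : QubitSpace) (hx : (x : Matrix (Fin 2) (Fin 2) ℂ).PosSemidef)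
    (ht : qTrace x = 1) : f1 x ^ 2 + f2 x ^ 2 + f3 x ^ 2 ≤ 1/4 := by
  set m : Matrix (Fin 2) (Fin 2) ℂ := (x : Matrix (Fin 2) (Fin 2) ℂ) with hm
  have h10 : m 1 0 = (starRingEnd ℂ) (m 0 1) := by
    conv_lhs => rw [← hx.1]
    simp [Matrix.conjTranspose_apply]
  have h00 : (m 0 0).im = 0 := by
    have : m 0 0 = (starRingEnd ℂ) (m 0 0) := by
      conv_lhs => rw [← hx.1]; simp [Matrix.conjTranspose_apply]
    have := congrArg Complex.im this
    simpa using by linarith [this, Complex.conj_im (m 0 0)]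
  have h11 : (m 1 1).im = 0 := by
    have : m 1 1 = (starRingEnd ℂ) (m 1 1) := by
      conv_lhs => rw [← hx.1]; simp [Matrix.conjTranspose_apply]
    have := congrArg Complex.im this
    simpa using by linarith [this, Complex.conj_im (m 1 1)]
  set a : ℝ := (m 0 0).re with ha
  set d : ℝ := (m 1 1).re with hd
  set pr : ℝ := (m 0 1).re with hpr
  set qi : ℝ := (m 0 1).im with hqi
  have htr : a + d = 1 := by
    have := ht
    simp [qTrace, Matrix.trace, Fin.sum_univ_two, ← hm] at this
    linarith [this]
  have hq1 : 0 ≤ a := by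
    have := (Complex.le_def.mp (hx.dotProduct_mulVec_nonneg ![1, 0])).1
    simpa [dotProduct, Matrix.mulVec, Fin.sum_univ_two] using this
  have hq2 : 0 ≤ d := by
    have := (Complex.le_def.mp (hx.dotProduct_mulVec_nonneg ![0, 1])).1
    simpa [dotProduct, Matrix.mulVec, Fin.sum_univ_two] using this
  have hqA : 0 ≤ d * (pr^2+qi^2) * (a * d - (pr^2+qi^2)) := by
    have := (Complex.le_def.mp (hx.dotProduct_mulVec_nonneg ![(d : ℂ) * m 0 1, ((-(pr^2+qi^2) : ℝ) : ℂ)])).1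
    simp only [dotProduct, Matrix.mulVec, Fin.sum_univ_two] at this
    simp [h10, Complex.ext_iff, Complex.add_re, Complex.mul_re, Complex.mul_im,
      ← Complex.ofReal_pow, h00, h11, ← ha, ← hd, ← hpr, ← hqi] at this
    nlinarith [this]
  have hqB : 0 ≤ a * (pr^2+qi^2) * (a * d - (pr^2+qi^2)) := by
    have := (Complex.le_def.mp (hx.dotProduct_mulVec_nonneg ![((-(pr^2+qi^2) : ℝ) : ℂ), (a : ℂ) * (starRingEnd ℂ) (m 0 1)])).1
    simp only [dotProduct, Matrix.mulVec, Fin.sum_univ_two] at this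
    simp [h10, Complex.ext_iff, Complex.add_re, Complex.mul_re, Complex.mul_im,
      ← Complex.ofReal_pow, h00, h11, ← ha, ← hd, ← hpr, ← hqi] at this
    nlinarith [this]
  have hsum : 0 ≤ (pr^2+qi^2) * (a * d - (pr^2+qi^2)) := by
    have h' : (pr^2+qi^2) * (a * d - (pr^2+qi^2)) =
        d * (pr^2+qi^2) * (a * d - (pr^2+qi^2)) + a * (pr^2+qi^2) * (a * d - (pr^2+qi^2)) := by
      linear_combination -((pr^2+qi^2) * (a * d - (pr^2+qi^2))) * htr
    rw [h']; linarith [hqA, hqB]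
  have hLad : pr^2 + qi^2 ≤ a * d := by
    rcases eq_or_lt_of_le (by positivity : (0:ℝ) ≤ pr^2+qi^2) with h | h
    · nlinarith [mul_nonneg hq1 hq2, h]
    · nlinarith [hsum, h]
  have hf1 : f1 x = pr := by
    simp [f1, ← hm, h10, ← hpr]; try ring
  have hf2 : f2 x = -qi := by
    simp [f2, ← hm, h10, ← hqi]; try ring
  have hf3 : f3 x = (a - d)/2 := by
    simp [f3, ← hm, ← ha, ← hd]
  rw [hf1, hf2, hf3]
  nlinarith [hLad, htr]

/-- For `A` the Hermitian 2×2 matrices with trace order unit, the maximal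
tensor product of `A` with itself strictly contains the minimal one: there is a bilinear
form on `A* × A*` that is nonnegative on pairs of positive functionals and normalized,
but is not a convex combination of product states. -/
theorem quantum_max_tensor_strictly_contains_min :
    ∃ ω : (QubitSpace →ₗ[ℝ] ℝ) →ₗ[ℝ] (QubitSpace →ₗ[ℝ] ℝ) →ₗ[ℝ] ℝ,
      (∀ a b : QubitSpace →ₗ[ℝ] ℝ,
        (∀ x : QubitSpace, (x : Matrix (Fin 2) (Fin 2) ℂ).PosSemidef → 0 ≤ a x) →
        (∀ x : QubitSpace, (x : Matrix (Fin 2) (Fin 2) ℂ).PosSemidef → 0 ≤ b x) →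
        0 ≤ ω a b) ∧
      ω qTrace qTrace = 1 ∧
      ¬∃ (n : ℕ) (p : Fin n → ℝ) (α β : Fin n → QubitSpace),
        (∀ i, 0 ≤ p i) ∧ (∑ i, p i = 1) ∧
        (∀ i, (α i : Matrix (Fin 2) (Fin 2) ℂ).PosSemidef ∧ qTrace (α i) = 1 ∧
              (β i : Matrix (Fin 2) (Fin 2) ℂ).PosSemidef ∧ qTrace (β i) = 1) ∧
        (∀ a b, ω a b = ∑ i, p i * (a (α i) * b (β i))) := by
  refine ⟨omg, ?_, ?_, ?_⟩
  · intro a b ha hb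
    have hρ := rho_psd a ha
    have hb' := hb _ hρ
    have he : omg a b =
        (1/2) * b ((1/2:ℝ) • (a s0 • s0 + a s1 • s1 + a s2 • s2 + a s3 • s3)) := by
      simp [omg]; ring
    rw [he]; linarith
  · have e0 : qTrace s0 = 2 := by
      simp [qTrace, s0, Matrix.trace, Fin.sum_univ_two]; try norm_num
    have e1 : qTrace s1 = 0 := by
      simp [qTrace, s1, Matrix.trace, Fin.sum_univ_two]
    have e2 : qTrace s2 = 0 := by
      simp [qTrace, s2, Matrix.trace, Fin.sum_univ_two]
    have e3 : qTrace s3 = 0 := by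
      simp [qTrace, s3, Matrix.trace, Fin.sum_univ_two]; try norm_num
    simp [omg, e0, e1, e2, e3]; norm_num
  · rintro ⟨n, p, α, β, hp, hpsum, hst, heq⟩
    have key : ∀ i, f1 (α i) * f1 (β i) + f2 (α i) * f2 (β i) + f3 (α i) * f3 (β i) ≤ 1/4 := by
      intro i
      obtain ⟨hA, hAt, hB, hBt⟩ := hst i
      have h1 := bloch_bound (α i) hA hAt
      have h2 := bloch_bound (β i) hB hBt
      nlinarith [sq_nonneg (f1 (α i) - f1 (β i)), sq_nonneg (f2 (α i) - f2 (β i)),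
        sq_nonneg (f3 (α i) - f3 (β i))]
    have hv1 : omg f1 f1 = 1/4 := by
      simp [omg, f1, s0, s1, s2, s3]; try norm_num
    have hv2 : omg f2 f2 = 1/4 := by
      simp [omg, f2, s0, s1, s2, s3]; try norm_num
    have hv3 : omg f3 f3 = 1/4 := by
      simp [omg, f3, s0, s1, s2, s3]; try norm_num
    have hcalc : (3:ℝ)/4 =
        ∑ i, p i * (f1 (α i) * f1 (β i) + f2 (α i) * f2 (β i) + f3 (α i) * f3 (β i)) := by
      calc (3:ℝ)/4 = omg f1 f1 + omg f2 f2 + omg f3 f3 := by rw [hv1, hv2, hv3]; norm_num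
        _ = ∑ i, p i * (f1 (α i) * f1 (β i)) + ∑ i, p i * (f2 (α i) * f2 (β i))
              + ∑ i, p i * (f3 (α i) * f3 (β i)) := by rw [heq f1 f1, heq f2 f2, heq f3 f3]
        _ = _ := by
              rw [← Finset.sum_add_distrib, ← Finset.sum_add_distrib]
              exact Finset.sum_congr rfl (fun i _ => by ring)
    have hle : ∑ i, p i * (f1 (α i) * f1 (β i) + f2 (α i) * f2 (β i) + f3 (α i) * f3 (β i))
        ≤ ∑ i, p i * (1/4) := by
      exact Finset.sum_le_sum (fun i _ => mul_le_mul_of_nonneg_left (key i) (hp i))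
    have hq : ∑ i, p i * (1/4 : ℝ) = 1/4 := by
      rw [← Finset.sum_mul, hpsum]; norm_num
    rw [hq] at hle
    linarith [hcalc ▸ hle]
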